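/- arXiv:1806.08535 — 2 statements merged into one kernel-verified Lean document; each statement's English description precedes it below -/
import Mathlib

section
/- (Almost-sure merging) Consider the random transmission model on a static strongly connected digraph G = (V, E) with n = |V| ≥ 2 nodes. Let z_j[0] = 1 for every node j and z_l[k+1] = ∑_{j : f_k(j) = l} z_j[k], where (f_k) is the i.i.d. sequence of random transmission functions of the model. Then almost surely there exist a finite time k₀ and a node j₀ such that z_{j₀}[k₀] = n (and hence z_i[k₀] = 0 for all i ≠ j₀), i.e., all mass merges at a single node in finite time with probability one. -/
open MeasureTheory ProbabilityTheory

/-- iterated relation of given length -/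
private def RP {V : Type*} (R : V → V → Prop) : ℕ → V → V → Prop
  | 0, a, b => a = b
  | (m+1), a, b => ∃ c, R a c ∧ RP R m c b

private lemma rtg_to_rp {V : Type*} {R : V → V → Prop} {a b : V}
    (h : Relation.ReflTransGen R a b) : ∃ m, RP R m a b := by
  induction h using Relation.ReflTransGen.head_induction_on with
  | refl => exact ⟨0, rfl⟩
  | head hr _ ih =>
      obtain ⟨m, hm⟩ := ih
      exact ⟨m + 1, _, hr, hm⟩

/-- existence of a single transmission map whose iterates send everyone to a common node -/
private lemma exists_merging_map {V : Type*} [Fintype V] [Nonempty V] [DecidableEq V]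
    (Nplus : V → Finset V)
    (hsc : ∀ a b : V, Relation.ReflTransGen (fun u v => v ∈ Nplus u) a b) :
    ∃ (g : V → V) (v₀ : V) (T : ℕ),
      (∀ a, g a ∈ insert a (Nplus a)) ∧ ∀ a, g^[T] a = v₀ := by
  obtain ⟨v₀⟩ := (inferInstance : Nonempty V)
  set R := fun u v : V => v ∈ Nplus u with hR
  classical
  have hex : ∀ a, ∃ m, RP R m a v₀ := fun a => rtg_to_rp (hsc a v₀)
  set d : V → ℕ := fun a => Nat.find (hex a) with hd
  have hstep : ∀ a, ∃ b, b ∈ insert a (Nplus a) ∧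
      ((a = v₀ ∧ b = a) ∨ (a ≠ v₀ ∧ d b < d a)) := by
    intro a
    by_cases h : a = v₀
    · exact ⟨a, Finset.mem_insert_self _ _, Or.inl ⟨h, rfl⟩⟩
    · have hspec : RP R (d a) a v₀ := Nat.find_spec (hex a)
      cases hda : d a with
      | zero =>
          rw [hda] at hspec
          exact absurd hspec h
      | succ m =>
          rw [hda] at hspec
          obtain ⟨c, hac, hc⟩ := hspec
          have hdc : d c ≤ m := Nat.find_le hc
          exact ⟨c, Finset.mem_insert_of_mem hac, Or.inr ⟨h, by omega⟩⟩
  choose g hg1 hg2 using hstep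
  have hfix : g v₀ = v₀ := by
    rcases hg2 v₀ with ⟨_, h⟩ | ⟨h, _⟩
    · exact h
    · exact absurd rfl h
  have hfixiter : ∀ m, g^[m] v₀ = v₀ := by
    intro m
    induction m with
    | zero => rfl
    | succ m ih => rw [Function.iterate_succ_apply, hfix, ih]
  have key : ∀ m a, d a ≤ m → g^[m] a = v₀ := by
    intro m
    induction m with
    | zero =>
        intro a ha
        have : RP R (d a) a v₀ := Nat.find_spec (hex a)
        have h0 : d a = 0 := Nat.le_zero.mp ha
        rw [h0] at this
        simpa [RP] using this
    | succ m ih =>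
        intro a ha
        by_cases h : a = v₀
        · rw [h]; exact hfixiter _
        · rcases hg2 a with ⟨h', _⟩ | ⟨_, hlt⟩
          · exact absurd h' h
          · rw [Function.iterate_succ_apply]
            exact ih _ (by omega)
  refine ⟨g, v₀, Finset.univ.sup d, hg1, fun a => key _ a ?_⟩
  exact Finset.le_sup (Finset.mem_univ a)

/-- total mass is conserved -/
private lemma mass_conserved {V : Type*} [Fintype V] [DecidableEq V] {Ω : Type*}
    (f : ℕ → Ω → V → V) (z : ℕ → Ω → V → ℕ)
    (hz0 : ∀ ω j, z 0 ω j = 1)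
    (hzrec : ∀ k ω l,
      z (k + 1) ω l = ∑ j ∈ Finset.univ.filter (fun j => f k ω j = l), z k ω j) :
    ∀ k ω, ∑ j, z k ω j = Fintype.card V := by
  intro k ω
  induction k with
  | zero => simp [hz0]
  | succ k ih =>
      calc ∑ l, z (k+1) ω l
          = ∑ l, ∑ j ∈ Finset.univ.filter (fun j => f k ω j = l), z k ω j := by
            simp only [hzrec]
        _ = ∑ j, z k ω j :=
            Finset.sum_fiberwise_of_maps_to (fun j _ => Finset.mem_univ _) _
        _ = Fintype.card V := ih

/-- evolution under a deterministic block of maps -/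
private lemma push_lemma {V : Type*} [Fintype V] [DecidableEq V] {Ω : Type*}
    (f : ℕ → Ω → V → V) (z : ℕ → Ω → V → ℕ)
    (hzrec : ∀ k ω l,
      z (k + 1) ω l = ∑ j ∈ Finset.univ.filter (fun j => f k ω j = l), z k ω j)
    (g : V → V) (k : ℕ) (ω : Ω) :
    ∀ T : ℕ, (∀ t < T, ∀ j, f (k + t) ω j = g j) →
      ∀ l, z (k + T) ω l = ∑ j ∈ Finset.univ.filter (fun j => g^[T] j = l), z k ω j := by
  intro T
  induction T with
  | zero =>
      intro _ l
      simp [Finset.filter_eq', Finset.sum_filter]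
      refine (Finset.sum_eq_single_of_mem (s := Finset.univ.filter (fun j => j = l)) (f := fun j => z k ω j) l (Finset.mem_filter.mpr ⟨Finset.mem_univ _, rfl⟩) ?_).symm
      intro j hj hne
      exact absurd (Finset.mem_filter.mp hj).2 hne
  | succ T ih =>
      intro h l
      have h1 : ∀ j, f (k + T) ω j = g j := h T (by omega)
      have ih' := ih (fun t ht j => h t (by omega) j)
      have hk : k + (T + 1) = (k + T) + 1 := by ring
      rw [hk, hzrec]
      calc ∑ j ∈ Finset.univ.filter (fun j => f (k+T) ω j = l), z (k+T) ω j
          = ∑ j ∈ Finset.univ.filter (fun j => g j = l), z (k+T) ω j := by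
            simp only [h1]
        _ = ∑ j ∈ Finset.univ.filter (fun j => g j = l),
              ∑ i ∈ Finset.univ.filter (fun i => g^[T] i = j), z k ω i := by
            refine Finset.sum_congr rfl fun j _ => ih' j
        _ = ∑ i ∈ Finset.univ.filter
              (fun i => g^[T] i ∈ Finset.univ.filter (fun j => g j = l)), z k ω i :=
            Finset.sum_fiberwise_eq_sum_filter _ _ _ _
        _ = ∑ i ∈ Finset.univ.filter (fun i => g^[T+1] i = l), z k ω i := by
            refine Finset.sum_congr ?_ fun _ _ => rfl
            refine Finset.filter_congr fun i _ => ?_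
            simp [Function.iterate_succ_apply']

/-- Almost-sure merging: in the random transmission model on a static strongly
connected digraph with `n ≥ 2` nodes (each node independently, at each step,
sends its whole mass uniformly at random to one of its out-neighbors or keeps
it), starting from unit masses, almost surely all mass merges at a single node
in finite time. -/
theorem almost_sure_merging
    {V : Type*} [Fintype V] [DecidableEq V] [MeasurableSpace V]
    [MeasurableSingletonClass V]
    {n : ℕ} (hcard : Fintype.card V = n) (hn : 2 ≤ n)
    (Nplus : V → Finset V)                      -- out-neighborhoods
    (hNoSelf : ∀ j : V, j ∉ Nplus j)            -- no self-loops
    (hsc : ∀ a b : V, Relation.ReflTransGen (fun u v => v ∈ Nplus u) a b)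
    {Ω : Type*} [MeasurableSpace Ω] (μ : Measure Ω) [IsProbabilityMeasure μ]
    (f : ℕ → Ω → V → V)                          -- random transmission functions
    (hMeas : ∀ k j, Measurable (fun ω => f k ω j))
    (hSupp : ∀ k ω j, f k ω j ∈ insert j (Nplus j))
    (hIndep : iIndepFun (fun p : ℕ × V => fun ω => f p.1 ω p.2) μ)
    (hDist : ∀ k (j l : V),
      μ {ω | f k ω j = l} =
        if l ∈ insert j (Nplus j) then (1 : ENNReal) / (1 + (Nplus j).card) else 0)
    (z : ℕ → Ω → V → ℕ)
    (hz0 : ∀ ω j, z 0 ω j = 1)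
    (hzrec : ∀ k ω l,
      z (k + 1) ω l = ∑ j ∈ Finset.univ.filter (fun j => f k ω j = l), z k ω j) :
    ∀ᵐ ω ∂μ, ∃ k₀ : ℕ, ∃ j₀ : V,
      z k₀ ω j₀ = n ∧ ∀ i, i ≠ j₀ → z k₀ ω i = 0 := by
  classical
  have hnV : Nonempty V := Fintype.card_pos_iff.mp (by omega)
  obtain ⟨g, v₀, T, hg, hgT⟩ := exists_merging_map Nplus hsc
  set F : ℕ × V → Ω → V := fun p ω => f p.1 ω p.2 with hF
  set q : V → ENNReal := fun j => 1 / (1 + (Nplus j).card) with hq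
  set blk : ℕ → Finset (ℕ × V) := fun M => Finset.Ico (M*T) (M*T+T) ×ˢ Finset.univ
    with hblk
  set A : ℕ → Set Ω := fun M => ⋂ p ∈ blk M, F p ⁻¹' {g p.2} with hA
  have hAmem : ∀ M ω, ω ∈ A M ↔ ∀ p ∈ blk M, f p.1 ω p.2 = g p.2 := by
    intro M ω
    simp only [hA, Set.mem_iInter, Set.mem_preimage, Set.mem_singleton_iff]
    exact Iff.rfl
  have hAmeas : ∀ M, MeasurableSet (A M) := by
    intro M
    refine MeasurableSet.biInter (Finset.countable_toSet _) fun p _ => ?_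
    exact (hMeas p.1 p.2) (measurableSet_singleton _)
  set c : ENNReal := (∏ j, q j) ^ T with hc
  have hAval : ∀ M, μ (A M) = c := by
    intro M
    have hprod := (iIndepFun_iff_measure_inter_preimage_eq_mul.mp hIndep) (blk M)
      (sets := fun p => {g p.2}) (fun p _ => measurableSet_singleton _)
    have hEp : ∀ p : ℕ × V, μ (F p ⁻¹' {g p.2}) = q p.2 := by
      intro p
      have h1 : F p ⁻¹' {g p.2} = {ω | f p.1 ω p.2 = g p.2} := rfl
      rw [h1, hDist p.1 p.2 (g p.2), if_pos (hg p.2)]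
    calc μ (A M) = ∏ p ∈ blk M, μ (F p ⁻¹' {g p.2}) := hprod
      _ = ∏ p ∈ blk M, q p.2 := Finset.prod_congr rfl fun p _ => hEp p
      _ = ∏ t ∈ Finset.Ico (M*T) (M*T+T), ∏ j, q j := by
          rw [hblk]; exact Finset.prod_product _ _ _
      _ = c := by
          rw [Finset.prod_const, Nat.card_Ico, hc]
          congr 1
          omega
  have hq0 : ∀ j, q j ≠ 0 := by
    intro j
    have hne : (1 : ENNReal) + (Nplus j).card ≠ ⊤ := by
      simp [ENNReal.add_eq_top]
    rw [hq]
    simp only [one_div]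
    exact ENNReal.inv_ne_zero.mpr hne
  have hc0 : c ≠ 0 := pow_ne_zero _ (Finset.prod_ne_zero_iff.mpr fun j _ => hq0 j)
  have hc1 : c ≤ 1 := by rw [← hAval 0]; exact prob_le_one
  set B : ℕ → Set Ω := fun M => ⋂ m ∈ Finset.range M, (A m)ᶜ with hB
  have hBiff : ∀ M ω, ω ∈ B M ↔ ∀ m < M, ∃ p ∈ blk m, f p.1 ω p.2 ≠ g p.2 := by
    intro M ω
    simp only [hB, Set.mem_iInter, Finset.mem_range, Set.mem_compl_iff]
    refine forall_congr' fun m => imp_congr Iff.rfl ?_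
    rw [hAmem]
    push_neg
    rfl
  have hindepBA : ∀ M, μ (B M ∩ A M) = μ (B M) * μ (A M) := by
    intro M
    set S : Finset (ℕ × V) := Finset.range (M*T) ×ˢ Finset.univ with hS
    have hdisj : Disjoint S (blk M) := by
      rw [Finset.disjoint_left]
      rintro ⟨k, j⟩ hkS hkb
      simp only [hS, Finset.mem_product, Finset.mem_range] at hkS
      simp only [hblk, Finset.mem_product, Finset.mem_Ico] at hkb
      omega
    have hIF := hIndep.indepFun_finset S (blk M) hdisj (fun p => hMeas p.1 p.2)
    set ΦS : Ω → (S → V) := fun a (i : S) => F i a with hΦS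
    set ΦT : Ω → (blk M → V) := fun a (i : blk M) => F i a with hΦT
    have hBsat : B M = ΦS ⁻¹' (ΦS '' B M) := by
      refine Set.Subset.antisymm (Set.subset_preimage_image _ _) ?_
      rintro ω' ⟨ω, hω, hΦeq⟩
      rw [hBiff] at hω ⊢
      intro m hm
      obtain ⟨p, hpblk, hpne⟩ := hω m hm
      refine ⟨p, hpblk, ?_⟩
      have hpS : p ∈ S := by
        simp only [hblk, Finset.mem_product, Finset.mem_Ico] at hpblk
        simp only [hS, Finset.mem_product, Finset.mem_range]
        have hle : (m + 1) * T ≤ M * T := Nat.mul_le_mul_right T (by omega)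
        exact ⟨by nlinarith [hpblk.1.2], Finset.mem_univ _⟩
      have hco : f p.1 ω p.2 = f p.1 ω' p.2 := congrFun hΦeq ⟨p, hpS⟩
      rw [← hco]
      exact hpne
    have hAsat : A M = ΦT ⁻¹' (ΦT '' A M) := by
      refine Set.Subset.antisymm (Set.subset_preimage_image _ _) ?_
      rintro ω' ⟨ω, hω, hΦeq⟩
      rw [hAmem] at hω ⊢
      intro p hp
      have hco : f p.1 ω p.2 = f p.1 ω' p.2 := congrFun hΦeq ⟨p, hp⟩
      rw [← hco]
      exact hω p hp
    have hmeas1 : MeasurableSet (ΦS '' B M) := (Set.toFinite _).measurableSet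
    have hmeas2 : MeasurableSet (ΦT '' A M) := (Set.toFinite _).measurableSet
    calc μ (B M ∩ A M)
        = μ (ΦS ⁻¹' (ΦS '' B M) ∩ ΦT ⁻¹' (ΦT '' A M)) := by rw [← hBsat, ← hAsat]
      _ = μ (ΦS ⁻¹' (ΦS '' B M)) * μ (ΦT ⁻¹' (ΦT '' A M)) :=
          hIF.measure_inter_preimage_eq_mul _ _ hmeas1 hmeas2
      _ = μ (B M) * μ (A M) := by rw [← hBsat, ← hAsat]
  have hBsucc : ∀ M, μ (B (M + 1)) = μ (B M) * (1 - c) := by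
    intro M
    have hsplit : B (M + 1) = B M ∩ (A M)ᶜ := by
      simp only [hB, Finset.range_add_one, Finset.set_biInter_insert]
      exact Set.inter_comm _ _
    have hadd : μ (B (M + 1)) + μ (B M ∩ A M) = μ (B M) := by
      have hd := measure_inter_add_diff (μ := μ) (B M) (hAmeas M)
      rw [Set.diff_eq] at hd
      rw [hsplit, add_comm]
      exact hd
    have h2 : μ (B M) * (1 - c) + μ (B M) * c = μ (B M) := by
      rw [← mul_add, tsub_add_cancel_of_le hc1, mul_one]
    rw [hindepBA M, hAval M] at hadd
    have hfin : μ (B M) * c ≠ ⊤ :=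
      ENNReal.mul_ne_top (measure_ne_top μ _) (hc1.trans_lt ENNReal.one_lt_top).ne
    exact (ENNReal.add_left_inj hfin).mp (hadd.trans h2.symm)
  have hBbound : ∀ M, μ (B M) ≤ (1 - c) ^ M := by
    intro M
    induction M with
    | zero => simp [hB]
    | succ M ih =>
        rw [hBsucc M, pow_succ]
        exact mul_le_mul_left ih _
  have hiInter : μ (⋂ m, (A m)ᶜ) = 0 := by
    have hsub : ∀ M, (⋂ m, (A m)ᶜ) ⊆ B M := by
      intro M ω hω
      simp only [hB, Set.mem_iInter, Finset.mem_range]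
      intro m _
      exact Set.mem_iInter.mp hω m
    have hle : ∀ M, μ (⋂ m, (A m)ᶜ) ≤ (1 - c) ^ M :=
      fun M => (measure_mono (hsub M)).trans (hBbound M)
    have hlim : Filter.Tendsto (fun M => (1 - c) ^ M) Filter.atTop (nhds 0) :=
      ENNReal.tendsto_pow_atTop_nhds_zero_of_lt_one
        (ENNReal.sub_lt_self ENNReal.one_ne_top one_ne_zero hc0)
    have : μ (⋂ m, (A m)ᶜ) ≤ 0 := ge_of_tendsto' hlim hle
    exact le_antisymm this zero_le
  have hae : ∀ᵐ ω ∂μ, ∃ m, ω ∈ A m := by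
    rw [MeasureTheory.ae_iff]
    have hset : {ω | ¬ ∃ m, ω ∈ A m} = ⋂ m, (A m)ᶜ := by
      ext ω; simp
    rw [hset]
    exact hiInter
  filter_upwards [hae] with ω hω
  obtain ⟨m, hm⟩ := hω
  have hmatch : ∀ t < T, ∀ j, f (m * T + t) ω j = g j := by
    intro t ht j
    refine (hAmem m ω).mp hm (m * T + t, j) ?_
    simp only [hblk, Finset.mem_product, Finset.mem_Ico]
    exact ⟨⟨by omega, by omega⟩, Finset.mem_univ _⟩
  have hpush := push_lemma f z hzrec g (m * T) ω T hmatch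
  refine ⟨m * T + T, v₀, ?_, ?_⟩
  · rw [hpush v₀]
    have hfull : Finset.univ.filter (fun j => g^[T] j = v₀) = Finset.univ :=
      Finset.filter_true_of_mem (fun j _ => hgT j)
    rw [hfull, mass_conserved f z hz0 hzrec, hcard]
  · intro i hi
    rw [hpush i]
    have hempty : Finset.univ.filter (fun j => g^[T] j = i) = ∅ := by
      refine Finset.filter_false_of_mem fun j _ => ?_
      rw [hgT j]
      exact fun h => hi h.symm
    rw [hempty, Finset.sum_empty]
end

section
/- (Proposition 2) Consider the random transmission model on a static strongly connected digraph G = (V, E) with n = |V| ≥ 2 nodes, with given integer initial values y_j[0] ∈ ℤ, mass variables z_j[0] = 1, y_l[k+1] = ∑_{j : f_k(j) = l} y_j[k], z_l[k+1] = ∑_{j : f_k(j) = l} z_j[k], and state variables initialized as z^s_j[0] = 1, y^s_j[0] = y_j[0] and updated by: if z_j[k+1] ≥ z^s_j[k] then z^s_j[k+1] = z_j[k+1] and y^s_j[k+1] = y_j[k+1], otherwise z^s_j[k+1] = z^s_j[k] and y^s_j[k+1] = y^s_j[k]. Then with probability one there exists a finite k₀ ∈ ℕ such that for every k ≥ k₀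 and every node j: y^s_j[k] = ∑_{l} y_l[0] and z^s_j[k] = n; in particular every node's quotient q^s_j[k] = y^s_j[k] / z^s_j[k] equals the average (∑_l y_l[0]) / n of the initial values. -/
open MeasureTheory ProbabilityTheory

/-- `reachN r k a b` : `b` is reachable from `a` in exactly `k` steps of `r`. -/
private def reachN {V : Type*} (r : V → V → Prop) : ℕ → V → V → Prop
  | 0, a, b => a = b
  | (k+1), a, b => ∃ c, r a c ∧ reachN r k c b

private lemma reachN_tail {V : Type*} {r : V → V → Prop} :
    ∀ {k : ℕ} {a b c : V}, reachN r k a b → r b c → reachN r (k+1) a c := by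
  intro k
  induction k with
  | zero => intro a b c h hr; exact ⟨c, h ▸ hr, rfl⟩
  | succ k ih =>
    intro a b c h hr
    obtain ⟨d, hd, h'⟩ := h
    exact ⟨d, hd, ih h' hr⟩

private lemma exists_reachN {V : Type*} {r : V → V → Prop} {a b : V}
    (h : Relation.ReflTransGen r a b) : ∃ k, reachN r k a b := by
  induction h with
  | refl => exact ⟨0, rfl⟩
  | tail _ hr ih => obtain ⟨k, hk⟩ := ih; exact ⟨k + 1, reachN_tail hk hr⟩

/-- Second-Borel-Cantelli style lemma: almost surely, some length-`N` block of
times is such that every node's random transmission agrees with the fixed map `g`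
throughout the block. -/
private lemma as_exists_block {V : Type*} [Fintype V] [MeasurableSpace V]
    [MeasurableSingletonClass V]
    {Ω : Type*} [MeasurableSpace Ω] {μ : Measure Ω} [IsProbabilityMeasure μ]
    {f : ℕ → Ω → V → V}
    (hMeas : ∀ k j, Measurable (fun ω => f k ω j))
    (hIndep : iIndepFun
      (fun p : ℕ × V => fun ω => f p.1 ω p.2) μ)
    (g : V → V) (N : ℕ) (c : V → ENNReal)
    (hc : ∀ t u, μ {ω | f t ω u = g u} = c u) (hc0 : ∀ u, c u ≠ 0) :
    ∀ᵐ ω ∂μ, ∃ m : ℕ, ∀ t, m * N ≤ t → t < (m+1) * N → ∀ u, f t ω u = g u := by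
  classical
  set E : ℕ × V → Set Ω := fun p => {ω | f p.1 ω p.2 = g p.2} with hE
  have hEm : ∀ p : ℕ × V, MeasurableSet (E p) :=
    fun p => (hMeas p.1 p.2) (measurableSet_singleton (g p.2))
  set I : ℕ → Finset (ℕ × V) :=
    fun m => (Finset.Ico (m * N) ((m+1) * N)) ×ˢ Finset.univ with hI
  set B : ℕ → Set Ω := fun m => ⋂ p ∈ I m, E p with hB
  have hBm : ∀ m, MeasurableSet (B m) := fun m =>
    Set.Finite.measurableSet_biInter (Finset.finite_toSet _) (fun p _ => hEm p)
  set q : ENNReal := (∏ u, c u) ^ N with hqdef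
  have hq0 : q ≠ 0 := pow_ne_zero _ (Finset.prod_ne_zero_iff.2 fun u _ => hc0 u)
  -- probability of each block event
  have hBq : ∀ m, μ (B m) = q := by
    intro m
    have h1 : μ (⋂ p ∈ I m, E p) = ∏ p ∈ I m, μ (E p) :=
      hIndep.meas_biInter (fun p _ => ⟨{g p.2}, measurableSet_singleton _, rfl⟩)
    have h2 : B m = ⋂ p ∈ I m, E p := rfl
    rw [h2, h1]
    simp only [hI]
    rw [Finset.prod_product]
    have : ∀ t ∈ Finset.Ico (m * N) ((m+1) * N), (∏ u, μ (E (t, u))) = ∏ u, c u := by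
      intro t _
      exact Finset.prod_congr rfl fun u _ => hc t u
    rw [Finset.prod_congr rfl this, Finset.prod_const, Nat.card_Ico]
    congr 1
    rw [Nat.succ_mul]
    omega
  have hBcq : ∀ m, μ ((B m)ᶜ) = 1 - q := by
    intro m
    rw [prob_compl_eq_one_sub (hBm m), hBq]
  -- the main inductive bound
  have hbound : ∀ m, μ (⋂ m' ∈ Finset.range m, (B m')ᶜ) ≤ (1 - q) ^ m := by
    intro m
    induction m with
    | zero => simp
    | succ m ih =>
      set T : Finset (ℕ × V) := (Finset.range (m * N)) ×ˢ Finset.univ with hT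
      have hdisj : Disjoint (I m) T := by
        rw [Finset.disjoint_left]
        rintro ⟨t, u⟩ hS hTm
        simp only [hI, hT, Finset.mem_product, Finset.mem_Ico, Finset.mem_range] at hS hTm
        omega
      have hIF := hIndep.indepFun_finset (I m) T hdisj (fun p => hMeas p.1 p.2)
      have hmemT : ∀ m' < m, ∀ p ∈ I m', p ∈ T := by
        rintro m' hm' ⟨t, u⟩ hp
        simp only [hI, hT, Finset.mem_product, Finset.mem_Ico, Finset.mem_range] at hp ⊢
        refine ⟨lt_of_lt_of_le hp.1.2 ?_, Finset.mem_univ u⟩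
        exact Nat.mul_le_mul_right N hm'
      -- the set over the S-tuple
      set AS : Set ({x // x ∈ I m} → V) := {x | ∃ i, x i ≠ g (i : ℕ × V).2} with hAS
      have hASm : MeasurableSet AS := by
        have : AS = (⋂ i : {x // x ∈ I m},
            (fun x : {x // x ∈ I m} → V => x i) ⁻¹' {g (i : ℕ × V).2})ᶜ := by
          ext x; simp [hAS]
        rw [this]
        exact (MeasurableSet.iInter fun i =>
          (measurable_pi_apply i) (measurableSet_singleton _)).compl
      have hASpre :
          (fun a (i : {x // x ∈ I m}) => f (i : ℕ × V).1 a (i : ℕ × V).2) ⁻¹' AS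
            = (B m)ᶜ := by
        ext ω
        simp [hAS, hB, hE, Subtype.exists]
      -- the set over the T-tuple
      set AT : Set ({x // x ∈ T} → V) :=
        ⋂ m' ∈ Finset.range m, ⋃ p ∈ I m',
          {x : {x // x ∈ T} → V | ∀ h : p ∈ T, x ⟨p, h⟩ ≠ g p.2} with hAT
      have hATm : MeasurableSet AT := by
        refine MeasurableSet.biInter (Set.to_countable _) fun m' _ => ?_
        refine MeasurableSet.biUnion (Set.to_countable _) fun p _ => ?_
        by_cases hp : p ∈ T
        · have : {x : {x // x ∈ T} → V | ∀ h : p ∈ T, x ⟨p, h⟩ ≠ g p.2}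
              = ((fun x : {x // x ∈ T} → V => x ⟨p, hp⟩) ⁻¹' {g p.2})ᶜ := by
            ext x; simp [hp]
          rw [this]
          exact ((measurable_pi_apply _) (measurableSet_singleton _)).compl
        · have : {x : {x // x ∈ T} → V | ∀ h : p ∈ T, x ⟨p, h⟩ ≠ g p.2} = Set.univ := by
            ext x; simp [hp]
          rw [this]; exact MeasurableSet.univ
      have hATpre :
          (fun a (i : {x // x ∈ T}) => f (i : ℕ × V).1 a (i : ℕ × V).2) ⁻¹' AT
            = ⋂ m' ∈ Finset.range m, (B m')ᶜ := by
        ext ω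
        simp only [hAT, Set.mem_preimage, Set.mem_iInter, Set.mem_iUnion, hB, hE,
          Set.mem_compl_iff, Set.mem_setOf_eq, exists_prop, Finset.mem_range]
        constructor
        · intro h m' hm'
          obtain ⟨p, hpI, hpne⟩ := h m' hm'
          intro hall
          exact hpne (hmemT m' hm' p hpI) (hall p hpI)
        · intro h m' hm'
          have h2 := h m' hm'
          push_neg at h2
          obtain ⟨p, hpI, hpne⟩ := h2
          exact ⟨p, hpI, fun _ => hpne⟩
      rw [Finset.range_add_one, Finset.set_biInter_insert]
      calc μ ((B m)ᶜ ∩ ⋂ m' ∈ Finset.range m, (B m')ᶜ)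
          = μ ((B m)ᶜ) * μ (⋂ m' ∈ Finset.range m, (B m')ᶜ) := by
            rw [← hASpre, ← hATpre]
            exact hIF.measure_inter_preimage_eq_mul AS AT hASm hATm
        _ ≤ (1 - q) * (1 - q) ^ m := by
            rw [hBcq]
            exact mul_le_mul_right ih _
        _ = (1 - q) ^ (m + 1) := (pow_succ' _ _).symm
  -- conclude the intersection of all complements is null
  have hq1 : q ≤ 1 := (hBq 0) ▸ prob_le_one
  have htend : Filter.Tendsto (fun m => (1 - q) ^ m) Filter.atTop (nhds 0) :=
    ENNReal.tendsto_pow_atTop_nhds_zero_of_lt_one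
      (ENNReal.sub_lt_self ENNReal.one_ne_top one_ne_zero hq0)
  have hle : ∀ m, μ (⋂ m', (B m')ᶜ) ≤ (1 - q) ^ m := by
    intro m
    refine le_trans (measure_mono ?_) (hbound m)
    intro ω hω
    exact Set.mem_iInter₂.2 fun i _ => Set.mem_iInter.1 hω i
  have hT0 : μ (⋂ m', (B m')ᶜ) = 0 :=
    le_antisymm (ge_of_tendsto htend (Filter.Eventually.of_forall hle)) zero_le
  rw [ae_iff]
  have hset : {ω | ¬ ∃ m : ℕ, ∀ t, m * N ≤ t → t < (m+1) * N → ∀ u, f t ω u = g u}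
      = ⋂ m', (B m')ᶜ := by
    ext ω
    simp only [Set.mem_setOf_eq, not_exists, Set.mem_iInter, Set.mem_compl_iff, hB, hE,
      Set.mem_iInter, Set.mem_setOf_eq, hI]
    constructor
    · intro h m hm
      refine h m fun t ht1 ht2 u => ?_
      exact hm (t, u) (Finset.mem_product.2 ⟨Finset.mem_Ico.2 ⟨ht1, ht2⟩, Finset.mem_univ u⟩)
    · intro h m hm
      refine h m ?_
      rintro ⟨t, u⟩ hp
      rw [Finset.mem_product, Finset.mem_Ico] at hp
      exact hm t hp.1.1 hp.1.2 u
  rw [hset]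
  exact hT0

/-- Proposition 2: in the random transmission model on a static strongly
connected digraph with `n ≥ 2` nodes, running the probabilistic quantized
averaging algorithm (mass variables `y, z` transferred and summed at random,
state variables `yˢ, zˢ` overwritten whenever the received `z`-mass is at least
the stored `z`-state), with probability one there is a finite time `k₀` after
which every node's state variables equal `(∑ l, y_l[0], n)`, so every node's
quotient `yˢ/zˢ` equals the average of the initial values. -/
theorem randomized_quantized_average_consensus
    {V : Type*} [Fintype V] [DecidableEq V] [MeasurableSpace V]
    [MeasurableSingletonClass V]
    {n : ℕ} (hcard : Fintype.card V = n) (hn : 2 ≤ n)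
    (Nplus : V → Finset V)                      -- out-neighborhoods
    (hNoSelf : ∀ j : V, j ∉ Nplus j)            -- no self-loops
    (hsc : ∀ a b : V, Relation.ReflTransGen (fun u v => v ∈ Nplus u) a b)
    {Ω : Type*} [MeasurableSpace Ω] (μ : Measure Ω) [IsProbabilityMeasure μ]
    (f : ℕ → Ω → V → V)                          -- random transmission functions
    (hMeas : ∀ k j, Measurable (fun ω => f k ω j))
    (hSupp : ∀ k ω j, f k ω j ∈ insert j (Nplus j))
    (hIndep : iIndepFun
      (fun p : ℕ × V => fun ω => f p.1 ω p.2) μ)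
    (hDist : ∀ k (j l : V),
      μ {ω | f k ω j = l} =
        if l ∈ insert j (Nplus j) then (1 : ENNReal) / (1 + (Nplus j).card) else 0)
    (y0 : V → ℤ)                                 -- initial values
    (y : ℕ → Ω → V → ℤ) (z : ℕ → Ω → V → ℕ)      -- mass variables
    (ys : ℕ → Ω → V → ℤ) (zs : ℕ → Ω → V → ℕ)    -- state variables
    (hy0 : ∀ ω j, y 0 ω j = y0 j)
    (hz0 : ∀ ω j, z 0 ω j = 1)
    (hys0 : ∀ ω j, ys 0 ω j = y0 j)
    (hzs0 : ∀ ω j, zs 0 ω j = 1)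
    (hyrec : ∀ k ω l,
      y (k + 1) ω l = ∑ j ∈ Finset.univ.filter (fun j => f k ω j = l), y k ω j)
    (hzrec : ∀ k ω l,
      z (k + 1) ω l = ∑ j ∈ Finset.univ.filter (fun j => f k ω j = l), z k ω j)
    (hstate : ∀ k ω j,
      (zs (k + 1) ω j, ys (k + 1) ω j) =
        if z (k + 1) ω j ≥ zs k ω j
        then (z (k + 1) ω j, y (k + 1) ω j)
        else (zs k ω j, ys k ω j)) :
    ∀ᵐ ω ∂μ, ∃ k₀ : ℕ, ∀ k ≥ k₀, ∀ j : V,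
      ys k ω j = ∑ l, y0 l ∧ zs k ω j = n ∧
      (ys k ω j : ℚ) / (zs k ω j : ℚ) = (∑ l, y0 l : ℤ) / (n : ℚ) := by
  classical
  set S : ℤ := ∑ l, y0 l with hS
  -- componentwise state recursions
  have hzs' : ∀ k ω j, zs (k+1) ω j =
      if z (k+1) ω j ≥ zs k ω j then z (k+1) ω j else zs k ω j := by
    intro k ω j
    have := congrArg Prod.fst (hstate k ω j)
    simpa [apply_ite Prod.fst] using this
  have hys' : ∀ k ω j, ys (k+1) ω j =
      if z (k+1) ω j ≥ zs k ω j then y (k+1) ω j else ys k ω j := by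
    intro k ω j
    have := congrArg Prod.snd (hstate k ω j)
    simpa [apply_ite Prod.snd] using this
  -- conservation of mass
  have hzsum : ∀ k ω, ∑ l, z k ω l = n := by
    intro k
    induction k with
    | zero => intro ω; simp [hz0, ← hcard, Finset.card_univ]
    | succ k ih =>
      intro ω
      simp only [hzrec]
      rw [Finset.sum_fiberwise_of_maps_to (fun j _ => Finset.mem_univ (f k ω j))]
      exact ih ω
  have hysum : ∀ k ω, ∑ l, y k ω l = S := by
    intro k
    induction k with
    | zero => intro ω; simp [hy0, hS]
    | succ k ih =>
      intro ω
      simp only [hyrec]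
      rw [Finset.sum_fiberwise_of_maps_to (fun j _ => Finset.mem_univ (f k ω j))]
      exact ih ω
  -- no z-mass means no y-mass
  have hz0y0 : ∀ k ω l, z k ω l = 0 → y k ω l = 0 := by
    intro k
    induction k with
    | zero => intro ω l h; rw [hz0] at h; exact absurd h one_ne_zero
    | succ k ih =>
      intro ω l h
      rw [hzrec] at h
      rw [hyrec]
      refine Finset.sum_eq_zero fun v hv => ih ω v ?_
      exact (Finset.sum_eq_zero_iff.1 h) v hv
  have hzle : ∀ k ω l, z k ω l ≤ n := by
    intro k ω l
    rw [← hzsum k ω]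
    exact Finset.single_le_sum (fun i _ => Nat.zero_le _) (Finset.mem_univ l)
  -- full mass implies y carries the whole sum
  have hymass : ∀ k ω l, z k ω l = n → y k ω l = S := by
    intro k ω l h
    have hrest : ∀ l' ∈ Finset.univ.erase l, z k ω l' = 0 := by
      have hsum := hzsum k ω
      rw [← Finset.add_sum_erase _ _ (Finset.mem_univ l), h] at hsum
      intro l' hl'
      have : ∑ l' ∈ Finset.univ.erase l, z k ω l' = 0 := by omega
      exact (Finset.sum_eq_zero_iff.1 this) l' hl'
    have := hysum k ω
    rw [← Finset.add_sum_erase _ _ (Finset.mem_univ l)] at this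
    rw [Finset.sum_eq_zero (fun l' hl' => hz0y0 k ω l' (hrest l' hl'))] at this
    omega
  -- the stored z-state never exceeds n
  have hzsle : ∀ k ω l, zs k ω l ≤ n := by
    intro k
    induction k with
    | zero => intro ω l; rw [hzs0]; omega
    | succ k ih =>
      intro ω l
      rw [hzs']
      split
      · exact hzle _ ω l
      · exact ih ω l
  -- if full mass arrives at a node, its state gets set to (n, S)
  have hset : ∀ k ω l, z (k+1) ω l = n → zs (k+1) ω l = n ∧ ys (k+1) ω l = S := by
    intro k ω l h
    have hge : z (k+1) ω l ≥ zs k ω l := h ▸ hzsle k ω l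
    constructor
    · rw [hzs', if_pos hge]; exact h
    · rw [hys', if_pos hge]; exact hymass _ ω l h
  -- once set to (n, S), states persist
  have hpersist : ∀ ω l a b, a ≤ b → zs a ω l = n → ys a ω l = S →
      zs b ω l = n ∧ ys b ω l = S := by
    intro ω l a b hab hza hya
    induction b, hab using Nat.le_induction with
    | base => exact ⟨hza, hya⟩
    | succ b _ ih =>
      obtain ⟨ihz, ihy⟩ := ih
      by_cases hge : z (b+1) ω l ≥ zs b ω l
      · have hzb : z (b+1) ω l = n := le_antisymm (hzle _ ω l) (ihz ▸ hge)
        constructor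
        · rw [hzs', if_pos hge]; exact hzb
        · rw [hys', if_pos hge]; exact hymass _ ω l hzb
      · constructor
        · rw [hzs', if_neg hge]; exact ihz
        · rw [hys', if_neg hge]; exact ihy
  -- the probabilistic core: for every node j, a.s. the full mass reaches j
  have key : ∀ j : V, ∀ᵐ ω ∂μ, ∃ k, 1 ≤ k ∧ z k ω j = n := by
    intro j
    -- distance to j and a descending map g
    set r : V → V → Prop := fun u v => v ∈ Nplus u with hr
    have hre : ∀ u, ∃ k, reachN r k u j := fun u => exists_reachN (hsc u j)
    set d : V → ℕ := fun u => sInf {k | reachN r k u j} with hd'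
    have hd : ∀ u, reachN r (d u) u j := fun u => Nat.sInf_mem (hre u)
    have hdstep : ∀ u, u ≠ j → ∃ v, v ∈ Nplus u ∧ d v < d u := by
      intro u h
      rcases hk : d u with _ | m
      · have h0 := hd u
        rw [hk] at h0
        exact absurd h0 h
      · have h0 := hd u
        rw [hk] at h0
        obtain ⟨v, hv, hvr⟩ := h0
        exact ⟨v, hv, Nat.lt_succ_of_le (Nat.sInf_le hvr)⟩
    set g : V → V := fun u => if h : u = j then j else (hdstep u h).choose with hgdef
    have hgj : g j = j := by simp [hgdef]
    have hg1 : ∀ u, g u ∈ insert u (Nplus u) := by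
      intro u
      by_cases h : u = j
      · subst h; rw [hgj]; exact Finset.mem_insert_self _ _
      · simp only [hgdef, dif_neg h]
        exact Finset.mem_insert_of_mem (hdstep u h).choose_spec.1
    have hg2 : ∀ u, u ≠ j → d (g u) < d u := by
      intro u h
      simp only [hgdef, dif_neg h]
      exact (hdstep u h).choose_spec.2
    set D : ℕ := Finset.univ.sup d with hD
    set N : ℕ := D + 1 with hN
    -- apply the probabilistic block lemma
    set c : V → ENNReal := fun u => (1 : ENNReal) / (1 + (Nplus u).card) with hc'
    have hc : ∀ t u, μ {ω | f t ω u = g u} = c u := by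
      intro t u
      rw [hDist t u (g u), if_pos (hg1 u)]
    have hc0 : ∀ u, c u ≠ 0 := by
      intro u
      simp only [hc', ne_eq, ENNReal.div_eq_zero_iff, one_ne_zero, false_or]
      exact ENNReal.add_ne_top.2 ⟨ENNReal.one_ne_top, ENNReal.natCast_ne_top _⟩
    filter_upwards [as_exists_block hMeas hIndep g N c hc hc0] with ω hω
    obtain ⟨m, hblk⟩ := hω
    -- the flow argument: after the block, all mass is at j
    have flow : ∀ s, s ≤ N → ∀ u, z (m * N + s) ω u ≠ 0 → d u ≤ D - s := by
      intro s
      induction s with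
      | zero =>
        intro _ u _
        simpa using Finset.le_sup (f := d) (Finset.mem_univ u)
      | succ s ih =>
        intro hs u hu
        have hu' : z ((m * N + s) + 1) ω u ≠ 0 := hu
        rw [hzrec] at hu'
        obtain ⟨v, hvmem, hvz⟩ := Finset.exists_ne_zero_of_sum_ne_zero hu'
        rw [Finset.mem_filter] at hvmem
        have htlt : m * N + s < (m + 1) * N := by
          rw [Nat.succ_mul]; omega
        have hfv : f (m * N + s) ω v = g v :=
          hblk (m * N + s) (Nat.le_add_right _ _) htlt v
        have hgv : g v = u := by rw [← hfv]; exact hvmem.2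
        have hdv := ih (by omega) v hvz
        by_cases hvj : v = j
        · have huj : u = j := by rw [← hgv, hvj, hgj]
          have hdj : d j = 0 :=
            Nat.eq_zero_of_le_zero (Nat.sInf_le (show 0 ∈ {k | reachN r k j j} from rfl))
          rw [huj, hdj]
          exact Nat.zero_le _
        · have hlt := hg2 v hvj
          rw [hgv] at hlt
          omega
    have hzeros : ∀ u, u ≠ j → z (m * N + N) ω u = 0 := by
      intro u hu
      by_contra h
      have hle0 := flow N le_rfl u h
      have hd0 : d u = 0 := by omega
      have h0 := hd u
      rw [hd0] at h0
      exact hu h0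
    have hzj : z (m * N + N) ω j = n := by
      have hsum := hzsum (m * N + N) ω
      rw [Finset.sum_eq_single_of_mem j (Finset.mem_univ j)
        (fun b _ hb => hzeros b hb)] at hsum
      exact hsum
    exact ⟨m * N + N, by omega, hzj⟩
  -- combine over all nodes and conclude
  have hall : ∀ᵐ ω ∂μ, ∀ j : V, ∃ k, 1 ≤ k ∧ z k ω j = n :=
    (MeasureTheory.ae_all_iff).2 key
  filter_upwards [hall] with ω hω
  choose kk hk1 hkn using hω
  refine ⟨Finset.univ.sup kk, fun k hk j => ?_⟩
  have hkj : kk j ≤ k := le_trans (Finset.le_sup (Finset.mem_univ j)) hk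
  -- at time kk j the state of j is set to (n, S)
  obtain ⟨k', hk'⟩ : ∃ k', kk j = k' + 1 := ⟨kk j - 1, by have := hk1 j; omega⟩
  have hzkk : z (k' + 1) ω j = n := by rw [← hk']; exact hkn j
  obtain ⟨hz1, hy1⟩ := hset k' ω j hzkk
  rw [← hk'] at hz1 hy1
  obtain ⟨h2, h1⟩ := hpersist ω j (kk j) k hkj hz1 hy1
  exact ⟨h1, h2, by rw [h1, h2]⟩
end
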